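/- arXiv:math/9908145 — 4 statements merged into one kernel-verified Lean document; each statement's English description precedes it below -/
import Mathlib

section
/- Let n be a nonnegative integer and let a, b, c be real numbers with \((a+1)_n (c)_n \ne 0\). Then the n-th partial sum of the Gauss hypergeometric series at 1 satisfies \(\sum_{k=0}^n \frac{(a)_k (b)_k}{(c)_k\, k!} = \frac{(a+1)_n}{n!}\; {}_3F_2\!\left(\begin{matrix}-n, a, c-b\\ a+1, c\end{matrix}; 1\right)\), where the \({}_3F_2\) is the terminating hypergeometric sum \(\sum_{m=0}^n \frac{(-n)_m (a)_m (c-b)_m}{(a+1)_m (c)_m\, m!}\). -/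
open Finset

/-- Rising factorial (Pochhammer symbol) `(x)_k = x(x+1)⋯(x+k-1)`. -/
noncomputable def poch (x : ℝ) (k : ℕ) : ℝ := (ascPochhammer ℝ k).eval x

/-- Generalized binomial coefficient `C(y, m) = (y-m+1)_m / m!` for real `y`. -/
noncomputable def gbinom (y : ℝ) (m : ℕ) : ℝ := poch (y - m + 1) m / m.factorial

/-- Generalized binomial coefficient with integer lower index, zero for negative index. -/
noncomputable def gbinomZ (y : ℝ) (m : ℤ) : ℝ := if 0 ≤ m then gbinom y m.toNat else 0

/-- Generalized Laguerre polynomial `L_n^{(a)}(x)`, defined for all real `a`. -/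
noncomputable def Lag (n : ℕ) (a : ℝ) (x : ℝ) : ℝ :=
  ∑ k ∈ range (n + 1),
    (-1 : ℝ) ^ k * poch (a + k + 1) (n - k) / (n - k).factorial * x ^ k / k.factorial

lemma poch_zero (x : ℝ) : poch x 0 = 1 := by simp [poch]

lemma poch_succ (x : ℝ) (k : ℕ) : poch x (k + 1) = poch x k * (x + k) := by
  unfold poch; rw [ascPochhammer_succ_eval]

lemma poch_succ_left (x : ℝ) (k : ℕ) : poch x (k + 1) = x * poch (x + 1) k := by
  simp [poch, ascPochhammer_succ_left, Polynomial.eval_comp]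

lemma poch_add (x : ℝ) (i j : ℕ) : poch x (i + j) = poch x i * poch (x + i) j := by
  have h := congrArg (Polynomial.eval x) (ascPochhammer_mul (S := ℝ) i j)
  simp only [Polynomial.eval_mul, Polynomial.eval_comp, Polynomial.eval_add, Polynomial.eval_X,
    Polynomial.eval_natCast] at h
  unfold poch
  exact h.symm

/-- `∑_{j=0}^p (p!/j!) (x)_j = (x+1)_p`, division-free form. -/
lemma lemA (p : ℕ) (x : ℝ) :
    ∑ j ∈ range (p + 1), ((p.choose j * (p - j).factorial : ℕ) : ℝ) * poch x j
      = poch (x + 1) p := by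
  induction p generalizing x with
  | zero => simp [poch_zero]
  | succ p ih =>
    rw [Finset.sum_range_succ]
    have h1 : ∀ j ∈ range (p + 1),
        (((p + 1).choose j * (p + 1 - j).factorial : ℕ) : ℝ) * poch x j
          = ((p : ℝ) + 1) * (((p.choose j * (p - j).factorial : ℕ) : ℝ) * poch x j) := by
      intro j hj
      have hj' : j ≤ p := by simpa [Nat.lt_succ_iff] using hj
      have key : (p + 1).choose j * (p + 1 - j).factorial
          = (p + 1) * (p.choose j * (p - j).factorial) := by
        apply Nat.eq_of_mul_eq_mul_right (Nat.factorial_pos j)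
        have e1 : (p + 1).choose j * j.factorial * (p + 1 - j).factorial = (p + 1).factorial :=
          Nat.choose_mul_factorial_mul_factorial (by omega)
        have e2 : p.choose j * j.factorial * (p - j).factorial = p.factorial :=
          Nat.choose_mul_factorial_mul_factorial hj'
        calc (p + 1).choose j * (p + 1 - j).factorial * j.factorial
            = (p + 1).choose j * j.factorial * (p + 1 - j).factorial := by ring
          _ = (p + 1).factorial := e1
          _ = (p + 1) * p.factorial := Nat.factorial_succ p
          _ = (p + 1) * (p.choose j * j.factorial * (p - j).factorial) := by rw [e2]
          _ = (p + 1) * (p.choose j * (p - j).factorial) * j.factorial := by ring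
      rw [key]; push_cast; ring
    rw [Finset.sum_congr rfl h1, ← Finset.mul_sum, ih]
    simp only [Nat.choose_self, Nat.sub_self, Nat.factorial_zero, mul_one, Nat.cast_one, one_mul]
    rw [poch_succ_left, poch_succ]
    ring

/-- Vandermonde-type identity: `∑_k (-1)^k C(m,k) (b)_k (c+k)_{m-k} = (c-b)_m`. -/
lemma lemV (m : ℕ) (b c : ℝ) :
    ∑ k ∈ range (m + 1), (-1 : ℝ) ^ k * (m.choose k : ℝ) * poch b k * poch (c + k) (m - k)
      = poch (c - b) m := by
  induction m generalizing b c with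
  | zero => simp [poch_zero]
  | succ m ih =>
    rw [Finset.sum_range_succ']
    have key1 : ∀ i ∈ range (m + 1),
        (-1 : ℝ) ^ (i + 1) * ((m + 1).choose (i + 1) : ℝ) * poch b (i + 1) *
            poch (c + (i + 1 : ℕ)) (m + 1 - (i + 1))
          = (-b) * ((-1 : ℝ) ^ i * (m.choose i : ℝ) * poch (b + 1) i *
              poch ((c + 1) + i) (m - i))
            + (-1 : ℝ) ^ (i + 1) * (m.choose (i + 1) : ℝ) * poch b (i + 1) *
              poch (c + (i + 1 : ℕ)) (m + 1 - (i + 1)) := by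
      intro i hi
      have h1 : (m + 1).choose (i + 1) = m.choose i + m.choose (i + 1) :=
        Nat.choose_succ_succ m i
      have h2 : m + 1 - (i + 1) = m - i := by omega
      have h3 : (c + ((i : ℕ) + 1 : ℕ) : ℝ) = (c + 1) + (i : ℕ) := by push_cast; ring
      rw [h1, h2, h3, poch_succ_left b i]
      push_cast
      ring
    rw [Finset.sum_congr rfl key1, Finset.sum_add_distrib, ← Finset.mul_sum]
    have hih : ∑ i ∈ range (m + 1), (-1 : ℝ) ^ i * (m.choose i : ℝ) * poch (b + 1) i *
        poch ((c + 1) + i) (m - i) = poch (c - b) m := by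
      have := ih (b + 1) (c + 1)
      rw [show c + 1 - (b + 1) = c - b from by ring] at this
      exact this
    rw [hih]
    -- remaining: second sum + (k=0) term equals (c+m) * poch (c-b) m
    have key2 : (∑ i ∈ range (m + 1), (-1 : ℝ) ^ (i + 1) * (m.choose (i + 1) : ℝ) *
          poch b (i + 1) * poch (c + (i + 1 : ℕ)) (m + 1 - (i + 1)))
        + (-1 : ℝ) ^ 0 * ((m + 1).choose 0 : ℝ) * poch b 0 * poch (c + (0 : ℕ)) (m + 1 - 0)
        = poch (c - b) m * (c + m) := by
      have e1 : (∑ k ∈ range (m + 1 + 1), (-1 : ℝ) ^ k * (m.choose k : ℝ) *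
            poch b k * poch (c + k) (m + 1 - k))
          = (∑ i ∈ range (m + 1), (-1 : ℝ) ^ (i + 1) * (m.choose (i + 1) : ℝ) *
              poch b (i + 1) * poch (c + (i + 1 : ℕ)) (m + 1 - (i + 1)))
            + (-1 : ℝ) ^ 0 * ((m + 1).choose 0 : ℝ) * poch b 0 * poch (c + (0 : ℕ)) (m + 1 - 0) := by
        rw [Finset.sum_range_succ']
        norm_num
      rw [← e1, Finset.sum_range_succ]
      simp only [Nat.choose_succ_self, Nat.cast_zero, mul_zero, zero_mul, add_zero]
      have key3 : ∀ k ∈ range (m + 1),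
          (-1 : ℝ) ^ k * (m.choose k : ℝ) * poch b k * poch (c + k) (m + 1 - k)
            = ((-1 : ℝ) ^ k * (m.choose k : ℝ) * poch b k * poch (c + k) (m - k)) * (c + m) := by
        intro k hk
        have hk' : k ≤ m := by simpa [Nat.lt_succ_iff] using hk
        have h4 : m + 1 - k = (m - k) + 1 := by omega
        have h5 : ((c + k) + ((m - k : ℕ) : ℝ)) = c + m := by
          rw [Nat.cast_sub hk']; ring
        rw [h4, poch_succ, h5]
        ring
      rw [Finset.sum_congr rfl key3, ← Finset.sum_mul, ih b c]
    rw [add_assoc, key2, poch_succ]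
    ring

/-- `∑_{k=m}^n C(n,k)(n-k)! C(k,m) (x)_k = C(n,m)(x)_m (x+m+1)_{n-m}`. -/
lemma lemB (n m : ℕ) (hm : m ≤ n) (x : ℝ) :
    ∑ k ∈ Ico m (n + 1),
        ((n.choose k : ℝ) * ((n - k).factorial : ℝ) * (k.choose m : ℝ)) * poch x k
      = (n.choose m : ℝ) * poch x m * poch (x + m + 1) (n - m) := by
  rw [Finset.sum_Ico_eq_sum_range, show n + 1 - m = (n - m) + 1 from by omega]
  have step : ∀ j ∈ range ((n - m) + 1),
      ((n.choose (m + j) : ℝ) * ((n - (m + j)).factorial : ℝ) * ((m + j).choose m : ℝ)) *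
          poch x (m + j)
        = ((n.choose m : ℝ) * poch x m) *
            ((((n - m).choose j * ((n - m) - j).factorial : ℕ) : ℝ) * poch (x + m) j) := by
    intro j hj
    have hj' : j ≤ n - m := by simpa [Nat.lt_succ_iff] using hj
    have hc : n.choose (m + j) * (m + j).choose m = n.choose m * (n - m).choose j := by
      have h := Nat.choose_mul (n := n) (show m ≤ m + j by omega)
      simpa using h
    have hc' : (n.choose (m + j) : ℝ) * ((m + j).choose m : ℝ)
        = (n.choose m : ℝ) * ((n - m).choose j : ℝ) := by exact_mod_cast hc
    have hp : poch x (m + j) = poch x m * poch (x + m) j := poch_add x m j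
    have hsub : n - (m + j) = (n - m) - j := by omega
    rw [hp, hsub]
    push_cast
    linear_combination (((n - m) - j).factorial : ℝ) * poch x m * poch (x + m) j * hc'
  rw [Finset.sum_congr rfl step, ← Finset.mul_sum, lemA (n - m) (x + m)]

/-- Division-free core identity. -/
lemma lemP (n : ℕ) (a b c : ℝ) :
    ∑ k ∈ range (n + 1), ((n.choose k : ℝ) * ((n - k).factorial : ℝ)) *
        (poch a k * poch b k * poch (c + k) (n - k))
      = ∑ m ∈ range (n + 1), (-1 : ℝ) ^ m * (n.choose m : ℝ) *
          (poch a m * poch (c - b) m * poch (a + m + 1) (n - m) * poch (c + m) (n - m)) := by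
  have hb : ∀ k : ℕ, poch b k = ∑ m ∈ range (k + 1),
      (-1 : ℝ) ^ m * (k.choose m : ℝ) * poch (c - b) m * poch (c + m) (k - m) := by
    intro k
    have h := lemV k (c - b) c
    rw [sub_sub_cancel] at h
    exact h.symm
  have step1 : ∀ k ∈ range (n + 1),
      ((n.choose k : ℝ) * ((n - k).factorial : ℝ)) *
          (poch a k * poch b k * poch (c + k) (n - k))
        = ∑ m ∈ range (k + 1),
            (-1 : ℝ) ^ m *
              (((n.choose k : ℝ) * ((n - k).factorial : ℝ) * (k.choose m : ℝ)) * poch a k) *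
              poch (c - b) m * (poch (c + m) (k - m) * poch (c + k) (n - k)) := by
    intro k hk
    rw [hb k]
    simp only [Finset.mul_sum, Finset.sum_mul]
    exact Finset.sum_congr rfl fun m _ => by ring
  rw [Finset.sum_congr rfl step1]
  rw [Finset.sum_comm' (s' := fun m => Ico m (n + 1)) (t' := range (n + 1))
    (fun k m => by simp only [Finset.mem_range, Finset.mem_Ico]; omega)]
  refine Finset.sum_congr rfl fun m hm => ?_
  have hm' : m ≤ n := by simpa [Nat.lt_succ_iff] using hm
  have step2 : ∀ k ∈ Ico m (n + 1),
      (-1 : ℝ) ^ m *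
          (((n.choose k : ℝ) * ((n - k).factorial : ℝ) * (k.choose m : ℝ)) * poch a k) *
          poch (c - b) m * (poch (c + m) (k - m) * poch (c + k) (n - k))
        = ((-1 : ℝ) ^ m * poch (c - b) m * poch (c + m) (n - m)) *
            (((n.choose k : ℝ) * ((n - k).factorial : ℝ) * (k.choose m : ℝ)) * poch a k) := by
    intro k hk
    obtain ⟨hmk, hkn⟩ : m ≤ k ∧ k ≤ n := by
      simpa [Finset.mem_Ico, Nat.lt_succ_iff] using hk
    have hmerge : poch (c + m) (k - m) * poch (c + k) (n - k) = poch (c + m) (n - m) := by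
      have hh := poch_add (c + (m : ℝ)) (k - m) (n - k)
      rw [show k - m + (n - k) = n - m from by omega,
        show (c + (m : ℝ) + ((k - m : ℕ) : ℝ)) = c + (k : ℝ) from by
          rw [Nat.cast_sub hmk]; ring] at hh
      exact hh.symm
    rw [hmerge]
    ring
  rw [Finset.sum_congr rfl step2, ← Finset.mul_sum, lemB n m hm' a]
  ring

lemma negpoch (n : ℕ) : ∀ m ≤ n,
    poch (-(n : ℝ)) m * ((n - m).factorial : ℝ) = (-1 : ℝ) ^ m * (n.factorial : ℝ) := by
  intro m
  induction m with
  | zero => simp [poch_zero]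
  | succ m ih =>
    intro hm
    have hm' : m ≤ n := by omega
    rw [poch_succ]
    have h1 : (-(n : ℝ) + m) = -((n - m : ℕ) : ℝ) := by rw [Nat.cast_sub hm']; ring
    have h2 : (n - m).factorial = (n - m) * (n - (m + 1)).factorial := by
      rw [show n - m = (n - (m + 1)) + 1 from by omega, Nat.factorial_succ,
        show n - (m + 1) + 1 = n - m from by omega]
    calc poch (-(n : ℝ)) m * (-(n : ℝ) + ↑m) * ((n - (m + 1)).factorial : ℝ)
        = -(poch (-(n : ℝ)) m * (((n - m : ℕ) : ℝ) * ((n - (m + 1)).factorial : ℝ))) := by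
          rw [h1]; ring
      _ = -(poch (-(n : ℝ)) m * ((n - m).factorial : ℝ)) := by rw [h2]; push_cast; ring
      _ = -((-1 : ℝ) ^ m * (n.factorial : ℝ)) := by rw [ih hm']
      _ = (-1 : ℝ) ^ (m + 1) * (n.factorial : ℝ) := by ring

theorem partial_sum_gauss_hypergeometric (n : ℕ) (a b c : ℝ)
    (h : poch (a + 1) n * poch c n ≠ 0) :
    ∑ k ∈ range (n + 1), poch a k * poch b k / (poch c k * k.factorial)
      = poch (a + 1) n / n.factorial *
        ∑ m ∈ range (n + 1),
          poch (-(n : ℝ)) m * poch a m * poch (c - b) m /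
            (poch (a + 1) m * poch c m * m.factorial) := by
  have ha1 : poch (a + 1) n ≠ 0 := left_ne_zero_of_mul h
  have hcn : poch c n ≠ 0 := right_ne_zero_of_mul h
  have hnf : (n.factorial : ℝ) ≠ 0 := by exact_mod_cast n.factorial_ne_zero
  have hT : (n.factorial : ℝ) * poch c n ≠ 0 := mul_ne_zero hnf hcn
  refine mul_right_cancel₀ hT ?_
  have hsplitc : ∀ m ≤ n, poch c n = poch c m * poch (c + m) (n - m) := by
    intro m hm
    have hh := poch_add c m (n - m)
    rw [show m + (n - m) = n from by omega] at hh
    exact hh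
  have hsplita : ∀ m ≤ n, poch (a + 1) n = poch (a + 1) m * poch (a + m + 1) (n - m) := by
    intro m hm
    have hh := poch_add (a + 1) m (n - m)
    rw [show m + (n - m) = n from by omega,
      show (a + 1 + (m : ℝ)) = a + (m : ℝ) + 1 from by ring] at hh
    exact hh
  have eL : (∑ k ∈ range (n + 1), poch a k * poch b k / (poch c k * k.factorial)) *
        ((n.factorial : ℝ) * poch c n)
      = ∑ k ∈ range (n + 1), ((n.choose k : ℝ) * ((n - k).factorial : ℝ)) *
          (poch a k * poch b k * poch (c + k) (n - k)) := by
    rw [Finset.sum_mul]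
    refine Finset.sum_congr rfl fun k hk => ?_
    have hk' : k ≤ n := by simpa [Nat.lt_succ_iff] using hk
    have h1 := hsplitc k hk'
    have h2 : poch c k ≠ 0 := by
      intro h0; exact hcn (by rw [h1, h0, zero_mul])
    have h3 : (k.factorial : ℝ) ≠ 0 := by exact_mod_cast k.factorial_ne_zero
    have h4 : (n.factorial : ℝ) = (n.choose k : ℝ) * ((n - k).factorial : ℝ) * (k.factorial : ℝ) := by
      have hh := Nat.choose_mul_factorial_mul_factorial hk'
      push_cast [← hh]; ring
    rw [div_mul_eq_mul_div, div_eq_iff (mul_ne_zero h2 h3), h1, h4]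
    ring
  have eR : (poch (a + 1) n / n.factorial *
        ∑ m ∈ range (n + 1),
          poch (-(n : ℝ)) m * poch a m * poch (c - b) m /
            (poch (a + 1) m * poch c m * m.factorial)) * ((n.factorial : ℝ) * poch c n)
      = ∑ m ∈ range (n + 1), (-1 : ℝ) ^ m * (n.choose m : ℝ) *
          (poch a m * poch (c - b) m * poch (a + m + 1) (n - m) * poch (c + m) (n - m)) := by
    have hfold : (poch (a + 1) n / n.factorial *
        ∑ m ∈ range (n + 1),
          poch (-(n : ℝ)) m * poch a m * poch (c - b) m /
            (poch (a + 1) m * poch c m * m.factorial)) * ((n.factorial : ℝ) * poch c n)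
        = (poch (a + 1) n * poch c n) *
            ∑ m ∈ range (n + 1),
              poch (-(n : ℝ)) m * poch a m * poch (c - b) m /
                (poch (a + 1) m * poch c m * m.factorial) := by
      field_simp
    rw [hfold, Finset.mul_sum]
    refine Finset.sum_congr rfl fun m hm => ?_
    have hm' : m ≤ n := by simpa [Nat.lt_succ_iff] using hm
    have hA := hsplita m hm'
    have hC := hsplitc m hm'
    have pam : poch (a + 1) m ≠ 0 := by
      intro h0; exact ha1 (by rw [hA, h0, zero_mul])
    have pcm : poch c m ≠ 0 := by
      intro h0; exact hcn (by rw [hC, h0, zero_mul])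
    have hmf : (m.factorial : ℝ) ≠ 0 := by exact_mod_cast m.factorial_ne_zero
    have hnmf : ((n - m).factorial : ℝ) ≠ 0 := by exact_mod_cast (n - m).factorial_ne_zero
    have hfact : (n.factorial : ℝ)
        = (n.choose m : ℝ) * ((n - m).factorial : ℝ) * (m.factorial : ℝ) := by
      have hh := Nat.choose_mul_factorial_mul_factorial hm'
      push_cast [← hh]; ring
    have hX : poch (-(n : ℝ)) m = (-1 : ℝ) ^ m * (n.choose m : ℝ) * (m.factorial : ℝ) := by
      apply mul_right_cancel₀ hnmf
      rw [negpoch n m hm', hfact]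
      ring
    rw [hA, hC, hX]
    field_simp
  rw [eL, lemP n a b c, ← eR]
end

section
/- Laguerre inversion formula: For any real \(\alpha\) and nonnegative integers \(j \le i\), one has \(\sum_{k=j}^i L_{i-k}^{(-\alpha-i-1)}(-x)\, L_{k-j}^{(\alpha+j)}(x) = \delta_{ij}\) as an identity of polynomials in x, where \(\delta_{ij}\) is the Kronecker delta. -/
open Finset

lemma poch_reflect (y : ℝ) (v : ℕ) : poch y v = (-1)^v * poch (-y - v + 1) v := by
  have h := ascPochhammer_eval_neg_eq_descPochhammer ℝ (-y) v
  rw [neg_neg] at h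
  rw [poch, h, descPochhammer_eval_eq_ascPochhammer]
  norm_num [poch]

lemma desc_smeval_eq_eval (y : ℝ) (v : ℕ) :
    (descPochhammer ℤ v).smeval y = (descPochhammer ℝ v).eval y := by
  induction v with
  | zero => simp [Polynomial.smeval_one]
  | succ v ih =>
    rw [descPochhammer_succ_right, descPochhammer_succ_right, Polynomial.smeval_mul,
      Polynomial.eval_mul, ih, Polynomial.smeval_sub, Polynomial.smeval_X,
      Polynomial.smeval_natCast]
    simp

lemma gbinom_eq_choose (y : ℝ) (m : ℕ) : gbinom y m = Ring.choose y m := by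
  have h := Ring.descPochhammer_eq_factorial_smul_choose (R := ℝ) y m
  rw [desc_smeval_eq_eval] at h
  rw [gbinom, poch, ← descPochhammer_eval_eq_ascPochhammer, h, nsmul_eq_mul]
  field_simp

lemma gbinom_vand (A B : ℝ) (N : ℕ) :
    ∑ u ∈ range (N+1), gbinom B u * gbinom A (N - u) = gbinom (A + B) N := by
  simp only [gbinom_eq_choose]
  rw [add_comm A B, Ring.add_choose_eq N (Commute.all _ _),
    Finset.Nat.sum_antidiagonal_eq_sum_range_succ_mk]

lemma gbinom_cast_sub_one (N : ℕ) : gbinom ((N:ℝ) - 1) N = if N = 0 then 1 else 0 := by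
  have h : (N:ℝ) - 1 - N + 1 = 0 := by ring
  rw [gbinom, poch, h, ascPochhammer_eval_zero]
  split_ifs with h0 <;> simp [h0]

lemma Lag_ext (p n : ℕ) (hp : p ≤ n) (c y : ℝ) :
    Lag p c y = ∑ k ∈ range (n+1), (if k ≤ p then
      (-1:ℝ)^k * poch (c+k+1) (p-k) / (p-k).factorial * y^k / k.factorial else 0) := by
  rw [Lag]
  symm
  rw [← Finset.sum_subset (Finset.range_subset_range.mpr (Nat.succ_le_succ hp))
    (fun k _ hk => by rw [if_neg (by simpa [Nat.lt_succ] using hk)])]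
  apply Finset.sum_congr rfl
  intro k hk
  rw [if_pos (by simpa [Nat.lt_succ] using Finset.mem_range.mp hk)]

lemma term_eq (b x : ℝ) {n m s t : ℕ} (hm : m ≤ n) (hs : s ≤ n - m) (ht : t ≤ m) :
    ((-1:ℝ)^s * poch ((-b - n - 1) + s + 1) ((n-m) - s) / ((n-m)-s).factorial * (-x)^s / s.factorial)
      * ((-1:ℝ)^t * poch (b + t + 1) (m - t) / (m-t).factorial * x^t / t.factorial)
    = (-1:ℝ)^(n-s-t) * (-1)^t * x^(s+t) / (s.factorial * t.factorial)
        * (gbinom (b + n - s) ((n-m) - s) * gbinom (-b - t - 1) (m - t)) := by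
  have hvu : ((n-m)-s) + (m-t) = n - s - t := by omega
  set v := (n-m) - s with hv
  set u := m - t with hu
  have h1 : poch ((-b - ↑n - 1) + ↑s + 1) v = (-1)^v * (v.factorial * gbinom (b + ↑n - ↑s) v) := by
    rw [poch_reflect]
    have e : -((-b - ↑n - 1) + ↑s + 1) - ↑v + 1 = (b + ↑n - ↑s) - ↑v + 1 := by ring
    rw [e, gbinom]
    field_simp
  have h2 : poch (b + ↑t + 1) u = (-1)^u * (u.factorial * gbinom (-b - ↑t - 1) u) := by
    rw [poch_reflect]
    have e : -(b + ↑t + 1) - ↑u + 1 = (-b - ↑t - 1) - ↑u + 1 := by ring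
    rw [e, gbinom]
    field_simp
  have hx : ((-1:ℝ))^s * (-x)^s = x^s := by
    rw [← mul_pow]; norm_num
  rw [h1, h2, ← hvu, pow_add, neg_pow x s]
  have f1 : (v.factorial : ℝ) ≠ 0 := Nat.cast_ne_zero.mpr (Nat.factorial_ne_zero v)
  have f2 : (u.factorial : ℝ) ≠ 0 := Nat.cast_ne_zero.mpr (Nat.factorial_ne_zero u)
  have f3 : (s.factorial : ℝ) ≠ 0 := Nat.cast_ne_zero.mpr (Nat.factorial_ne_zero s)
  have f4 : (t.factorial : ℝ) ≠ 0 := Nat.cast_ne_zero.mpr (Nat.factorial_ne_zero t)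
  field_simp
  ring_nf
  have hs2 : ((-1:ℝ))^(s*2) = 1 := by rw [pow_mul']; norm_num
  rw [hs2]; ring



lemma lag_inner_sum (b : ℝ) (n s t : ℕ) :
    ∑ m ∈ range (n+1), (if s ≤ n - m ∧ t ≤ m then
        gbinom (b + n - s) ((n-m) - s) * gbinom (-b - t - 1) (m - t) else 0)
      = if s + t = n then 1 else 0 := by
  by_cases hst : s + t ≤ n
  · have hcong : ∀ m ∈ range (n+1), (if s ≤ n - m ∧ t ≤ m then
        gbinom (b + n - s) ((n-m) - s) * gbinom (-b - t - 1) (m - t) else 0)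
        = if m ∈ Icc t (n - s) then
        gbinom (b + n - s) ((n-m) - s) * gbinom (-b - t - 1) (m - t) else 0 := by
      intro m hm
      rw [Finset.mem_range] at hm
      congr 1
      simp only [Finset.mem_Icc, eq_iff_iff]
      omega
    have hsub : Icc t (n - s) ⊆ range (n+1) := by
      intro m hm
      rw [Finset.mem_Icc] at hm
      rw [Finset.mem_range]
      omega
    rw [Finset.sum_congr rfl hcong, Finset.sum_ite_mem,
      Finset.inter_eq_right.mpr hsub, ← Finset.Ico_add_one_right_eq_Icc, Finset.sum_Ico_eq_sum_range]
    have hN : n - s + 1 - t = (n - s - t) + 1 := by omega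
    rw [hN]
    have hcong2 : ∀ u ∈ range ((n - s - t) + 1),
        gbinom (b + n - s) ((n-(t+u)) - s) * gbinom (-b - t - 1) ((t+u) - t)
        = gbinom (-b - t - 1) u * gbinom (b + n - s) ((n - s - t) - u) := by
      intro u hu
      have e1 : (n-(t+u)) - s = (n - s - t) - u := by omega
      have e2 : (t+u) - t = u := by omega
      rw [e1, e2, mul_comm]
    rw [Finset.sum_congr rfl hcong2, gbinom_vand]
    have e3 : (b + ↑n - ↑s) + (-b - ↑t - 1) = ((n - s - t : ℕ) : ℝ) - 1 := by
      push_cast [Nat.cast_sub (by omega : t ≤ n - s), Nat.cast_sub (by omega : s ≤ n)]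
      ring
    rw [e3, gbinom_cast_sub_one]
    congr 1
    simp only [eq_iff_iff]
    omega
  · rw [Finset.sum_eq_zero, if_neg (by omega)]
    intro m hm
    rw [Finset.mem_range] at hm
    rw [if_neg (by omega)]

lemma alt_sum (n : ℕ) (x : ℝ) :
    ∑ s ∈ range (n+1), (-1:ℝ)^(n-s) * x^n / (s.factorial * (n-s).factorial)
      = if n = 0 then 1 else 0 := by
  rcases Nat.eq_zero_or_pos n with hn | hn
  · subst hn; simp
  · rw [if_neg (by omega)]
    have hterm : ∀ s ∈ range (n+1),
        (-1:ℝ)^(n-s) * x^n / (s.factorial * (n-s).factorial)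
        = (x^n / n.factorial) * ((-1:ℝ)^(n-s) * (n.choose s)) := by
      intro s hs
      rw [Finset.mem_range] at hs
      have hch : ((n.choose s : ℝ)) * s.factorial * (n-s).factorial = n.factorial := by
        exact_mod_cast congrArg (Nat.cast : ℕ → ℝ)
          (Nat.choose_mul_factorial_mul_factorial (by omega : s ≤ n))
      have f3 : (s.factorial : ℝ) ≠ 0 := Nat.cast_ne_zero.mpr (Nat.factorial_ne_zero s)
      have f4 : ((n-s).factorial : ℝ) ≠ 0 := Nat.cast_ne_zero.mpr (Nat.factorial_ne_zero _)
      have f5 : (n.factorial : ℝ) ≠ 0 := Nat.cast_ne_zero.mpr (Nat.factorial_ne_zero n)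
      field_simp
      linear_combination (-x^n) * hch
    rw [Finset.sum_congr rfl hterm, ← Finset.mul_sum]
    have hz : ∑ s ∈ range (n+1), (-1:ℝ)^(n-s) * (n.choose s) = 0 := by
      rw [← Finset.sum_range_reflect]
      have hc : ∀ j ∈ range (n+1),
          (-1:ℝ)^(n-(n+1-1-j)) * (n.choose (n+1-1-j)) = (-1:ℝ)^j * (n.choose j) := by
        intro j hj
        rw [Finset.mem_range] at hj
        have e1 : n+1-1-j = n - j := by omega
        have e2 : n-(n-j) = j := by omega
        rw [e1, e2, Nat.choose_symm (by omega : j ≤ n)]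
      rw [Finset.sum_congr rfl hc]
      exact_mod_cast Int.alternating_sum_range_choose_of_ne (by omega : n ≠ 0)
    rw [hz, mul_zero]

lemma key (b x : ℝ) (n : ℕ) :
    ∑ m ∈ range (n+1), Lag (n-m) (-b - ↑n - 1) (-x) * Lag m b x
      = if n = 0 then 1 else 0 := by
  have step1 : ∀ m ∈ range (n+1),
      Lag (n-m) (-b - ↑n - 1) (-x) * Lag m b x =
      ∑ s ∈ range (n+1), ∑ t ∈ range (n+1),
        (if s ≤ n - m ∧ t ≤ m then
          (-1:ℝ)^(n-s-t) * (-1)^t * x^(s+t) / (s.factorial * t.factorial)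
            * (gbinom (b + n - s) ((n-m) - s) * gbinom (-b - t - 1) (m - t)) else 0) := by
    intro m hm
    rw [Finset.mem_range] at hm
    rw [Lag_ext (n-m) n (by omega) _ (-x), Lag_ext m n (by omega) b x, Finset.sum_mul_sum]
    apply Finset.sum_congr rfl; intro s _
    apply Finset.sum_congr rfl; intro t _
    rw [ite_zero_mul_ite_zero]
    by_cases h : s ≤ n - m ∧ t ≤ m
    · rw [if_pos h, if_pos h]
      exact term_eq b x (by omega) h.1 h.2
    · rw [if_neg h, if_neg h]
  rw [Finset.sum_congr rfl step1, Finset.sum_comm]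
  have step2 : ∀ s ∈ range (n+1),
      (∑ m ∈ range (n+1), ∑ t ∈ range (n+1),
        (if s ≤ n - m ∧ t ≤ m then
          (-1:ℝ)^(n-s-t) * (-1)^t * x^(s+t) / (s.factorial * t.factorial)
            * (gbinom (b + n - s) ((n-m) - s) * gbinom (-b - t - 1) (m - t)) else 0))
      = ∑ t ∈ range (n+1), (if s + t = n then
          (-1:ℝ)^(n-s-t) * (-1)^t * x^(s+t) / (s.factorial * t.factorial) else 0) := by
    intro s hs
    rw [Finset.sum_comm]
    apply Finset.sum_congr rfl
    intro t ht
    have hpull : ∀ m ∈ range (n+1),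
        (if s ≤ n - m ∧ t ≤ m then
          (-1:ℝ)^(n-s-t) * (-1)^t * x^(s+t) / (s.factorial * t.factorial)
            * (gbinom (b + n - s) ((n-m) - s) * gbinom (-b - t - 1) (m - t)) else 0)
        = ((-1:ℝ)^(n-s-t) * (-1)^t * x^(s+t) / (s.factorial * t.factorial)) *
          (if s ≤ n - m ∧ t ≤ m then
            gbinom (b + n - s) ((n-m) - s) * gbinom (-b - t - 1) (m - t) else 0) := by
      intro m _
      rw [mul_ite, mul_zero]
    rw [Finset.sum_congr rfl hpull, ← Finset.mul_sum, lag_inner_sum, mul_ite, mul_one, mul_zero]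
  rw [Finset.sum_congr rfl step2]
  have step3 : ∀ s ∈ range (n+1),
      (∑ t ∈ range (n+1), (if s + t = n then
          (-1:ℝ)^(n-s-t) * (-1)^t * x^(s+t) / (s.factorial * t.factorial) else 0))
      = (-1:ℝ)^(n-s) * x^n / (s.factorial * (n-s).factorial) := by
    intro s hs
    rw [Finset.mem_range] at hs
    have hcong : ∀ t ∈ range (n+1), (if s + t = n then
          (-1:ℝ)^(n-s-t) * (-1)^t * x^(s+t) / (s.factorial * t.factorial) else 0)
        = (if t = n - s then
          (-1:ℝ)^(n-s-t) * (-1)^t * x^(s+t) / (s.factorial * t.factorial) else 0) := by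
      intro t ht
      rw [Finset.mem_range] at ht
      congr 1
      simp only [eq_iff_iff]
      omega
    rw [Finset.sum_congr rfl hcong, Finset.sum_ite_eq' (range (n+1)) (n-s),
      if_pos (Finset.mem_range.mpr (by omega))]
    have e1 : n - s - (n - s) = 0 := by omega
    have e2 : s + (n - s) = n := by omega
    rw [e1, e2, pow_zero, one_mul]
  rw [Finset.sum_congr rfl step3, alt_sum]

theorem laguerre_inversion (a : ℝ) (i j : ℕ) (hj : j ≤ i) (x : ℝ) :
    ∑ k ∈ Icc j i, Lag (i - k) (-a - i - 1) (-x) * Lag (k - j) (a + j) x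
      = if i = j then 1 else 0 := by
  obtain ⟨n, rfl⟩ : ∃ n, i = j + n := ⟨i - j, by omega⟩
  have hIcc : Icc j (j + n) = Ico j (j + n + 1) := (Finset.Ico_add_one_right_eq_Icc j (j+n)).symm
  rw [hIcc, Finset.sum_Ico_eq_sum_range]
  have hr : j + n + 1 - j = n + 1 := by omega
  rw [hr]
  have hcong : ∀ m ∈ range (n + 1),
      Lag ((j + n) - (j + m)) (-a - (j + n : ℕ) - 1) (-x) * Lag ((j + m) - j) (a + j) x
      = Lag (n - m) (-(a + j) - n - 1) (-x) * Lag m (a + j) x := by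
    intro m hm
    have e1 : (j + n) - (j + m) = n - m := by omega
    have e2 : (j + m) - j = m := by omega
    have e3 : -a - ((j + n : ℕ) : ℝ) - 1 = -(a + j) - n - 1 := by push_cast; ring
    rw [e1, e2, e3]
  rw [Finset.sum_congr rfl hcong, key (a + j) x n]
  congr 1
  simp only [eq_iff_iff]
  omega
end

section
/- Define \(K(p,q,r;s;\alpha,x) := \sum_{i=0}^{\infty}\sum_{j=0}^i \frac{(-1)^{i+j}}{\Gamma(i-s)}\binom{\alpha+p}{j}\binom{\alpha+q}{i-j}(\alpha+r)_{i-j}\,x^j\). For \(\alpha\in\{0,1,2,\ldots\}\) (so the double sum is finite) and integers r, s with \(r \ge 1\) and \(r+s \ge 0\), taking \(p=q=r+s\): \(K(r+s,\,r+s,\,r;\,s;\,\alpha,x) = (-1)^{\alpha+r+s}\,\frac{(\alpha+1)_{r+s}}{(\alpha+1)_{r-1}}\), independently of x. -/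
open Finset

section Helpers

lemma fwd_shift (c : ℕ) (g : ℕ → ℤ) (N : ℕ) :
    (fwdDiff (1:ℕ))^[N] (fun x => g (x + c)) = fun x => (fwdDiff (1:ℕ))^[N] g (x + c) := by
  induction N with
  | zero => rfl
  | succ N ih =>
    rw [Function.iterate_succ_apply', Function.iterate_succ_apply', ih]
    funext y
    simp only [fwdDiff, add_right_comm]

lemma iter_zero (t : ℕ) : (fwdDiff (1:ℕ))^[t] (fun _ : ℕ => (0:ℤ)) = fun _ => 0 := by
  induction t with
  | zero => rfl
  | succ t ih => rw [Function.iterate_succ_apply', ih]; funext y; simp [fwdDiff]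

lemma alt_sum_s17 (N c m : ℕ) (hm : m ≤ N) :
    ∑ k ∈ range (N+1), (-1:ℤ)^k * (N.choose k) * ((k+c).choose m)
      = if m = N then (-1:ℤ)^N else 0 := by
  have H := fwdDiff_iter_eq_sum_shift (1:ℕ) (fun x : ℕ => (((x + c).choose m : ℤ))) N 0
  simp only [smul_eq_mul, zero_add, mul_one, zsmul_eq_mul, Int.cast_mul, Int.cast_pow,
    Int.cast_neg, Int.cast_one, Int.cast_natCast] at H
  have key : (fwdDiff (1:ℕ))^[N] (fun x : ℕ => (((x + c).choose m : ℤ))) 0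
      = if m = N then 1 else 0 := by
    have hs : (fun x : ℕ => (((x + c).choose m : ℤ)))
        = fun x => (fun y : ℕ => ((y.choose m : ℤ))) (x + c) := rfl
    rw [hs, fwd_shift c (fun y : ℕ => ((y.choose m : ℤ))) N]
    rcases eq_or_lt_of_le hm with rfl | hlt
    · have := fwdDiff_iter_choose 0 m
      simp only [add_zero] at this
      rw [if_pos rfl, this]; simp
    · rw [if_neg hlt.ne]
      have hN : N = (N - m - 1) + 1 + m := by omega
      rw [hN, Function.iterate_add_apply]
      have h1 : (fwdDiff (1:ℕ))^[m] (fun y : ℕ => ((y.choose m : ℤ))) = fun _ => 1 := by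
        have := fwdDiff_iter_choose 0 m
        simp only [add_zero] at this
        rw [this]; funext y; simp
      rw [h1, Function.iterate_add_apply, Function.iterate_one]
      have h2 : fwdDiff (1:ℕ) (fun _ : ℕ => (1:ℤ)) = fun _ => 0 := by
        funext y; simp [fwdDiff]
      rw [h2, iter_zero]
  rw [key] at H
  have e1 : ∀ k ∈ range (N+1), (-1:ℤ)^k * (N.choose k) * ((k+c).choose m)
      = (-1)^N * ((-1)^(N-k) * (N.choose k) * ((k + c).choose m)) := by
    intro k hk
    simp only [mem_range] at hk
    have hk' : k ≤ N := by omega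
    have : (-1:ℤ)^N * (-1)^(N-k) = (-1)^k := by
      rw [← pow_add]
      have h2 : N + (N - k) = 2 * (N - k) + k := by omega
      rw [h2, pow_add, pow_mul]
      simp
    rw [← this]; ring
  rw [Finset.sum_congr rfl e1, ← Finset.mul_sum, ← H]
  split <;> simp

lemma alt_sumR (N c m : ℕ) (hm : m ≤ N) :
    ∑ k ∈ range (N+1), (-1:ℝ)^k * (N.choose k) * (((k+c).choose m : ℕ) : ℝ)
      = if m = N then (-1:ℝ)^N else 0 := by
  have h := alt_sum_s17 N c m hm
  have h2 : ((∑ k ∈ range (N+1), (-1:ℤ)^k * (N.choose k) * ((k+c).choose m) : ℤ) : ℝ)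
      = ∑ k ∈ range (N+1), (-1:ℝ)^k * (N.choose k) * (((k+c).choose m : ℕ) : ℝ) := by
    push_cast; rfl
  rw [← h2, h]
  split <;> simp

lemma poch_nat_cast (a k : ℕ) : poch ((a:ℕ):ℝ) k = (a.ascFactorial k : ℝ) := by
  unfold poch; rw [Nat.cast_ascFactorial]

lemma pg (α ρ n j k : ℕ) (hρ : 1 ≤ ρ) (hj : j ≤ α + n) :
    poch ((α:ℝ) + ρ) k / Real.Gamma ((j:ℝ) + k - ((n:ℝ) - ρ)) =
    ((α + n - j).factorial : ℝ) * ((k + (α + ρ - 1)).choose (α + n - j))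
      / ((α + ρ - 1).factorial : ℝ) := by
  set c := α + ρ - 1 with hc
  set m := α + n - j with hmdef
  have hc1 : c + 1 = α + ρ := by omega
  have hpoch : poch ((α:ℝ) + ρ) k = ((c+1).ascFactorial k : ℝ) := by
    have h1 : (α:ℝ) + ρ = (((c+1 : ℕ)):ℝ) := by rw [hc1]; push_cast; ring
    rw [h1, poch_nat_cast]
  rcases le_or_gt (j + k + ρ) n with h | h
  · have harg : (j:ℝ) + k - ((n:ℝ) - ρ) = -((n - (j+k+ρ) : ℕ) : ℝ) := by
      have hd : ((n - (j+k+ρ) : ℕ) : ℝ) = (n:ℝ) - j - k - ρ := by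
        rw [Nat.cast_sub h]; push_cast; ring
      rw [hd]; ring
    rw [harg, Real.Gamma_neg_nat_eq_zero, div_zero]
    have h0 : (k + c).choose m = 0 := Nat.choose_eq_zero_of_lt (by omega)
    rw [h0]; simp
  · have hm : m ≤ k + c := by omega
    set u := k + c - m with hu
    have hfac : (k+c).choose m * m.factorial * u.factorial = (k+c).factorial :=
      Nat.choose_mul_factorial_mul_factorial hm
    have harg : (j:ℝ) + k - ((n:ℝ) - ρ) = (u:ℝ) + 1 := by
      have h2 : j + k + ρ = n + 1 + u := by omega
      have h3 : (j:ℝ) + k + ρ = (n:ℝ) + 1 + u := by exact_mod_cast congrArg (Nat.cast : ℕ → ℝ) h2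
      linarith
    rw [harg, Real.Gamma_nat_eq_factorial, hpoch]
    have hasc : ((c.factorial : ℕ) : ℝ) * ((c+1).ascFactorial k : ℝ) = ((c+k).factorial : ℝ) := by
      exact_mod_cast congrArg (Nat.cast : ℕ → ℝ) (Nat.factorial_mul_ascFactorial c k)
    have hckr : ((k+c).factorial : ℝ) = ((k+c).choose m : ℝ) * m.factorial * u.factorial := by
      exact_mod_cast hfac.symm
    rw [div_eq_div_iff (by positivity) (by positivity)]
    have hcomm : (k + c).factorial = (c + k).factorial := by rw [add_comm]
    rw [hcomm] at hckr
    nlinarith [hasc, hckr]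

lemma tri (n : ℕ) (f : ℕ → ℕ → ℝ) :
    ∑ i ∈ range (n+1), ∑ j ∈ range (i+1), f j (i - j)
      = ∑ p ∈ (range (n+1) ×ˢ range (n+1)).filter (fun p => p.1 + p.2 ≤ n), f p.1 p.2 := by
  rw [Finset.sum_sigma']
  refine Finset.sum_nbij' (i := fun x => (x.2, x.1 - x.2)) (j := fun p => ⟨p.1 + p.2, p.1⟩)
    ?_ ?_ ?_ ?_ ?_
  · rintro ⟨a, b⟩ hab
    simp only [mem_sigma, mem_range, mem_filter, mem_product] at hab ⊢
    omega
  · rintro ⟨a, b⟩ hab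
    simp only [mem_sigma, mem_range, mem_filter, mem_product] at hab ⊢
    omega
  · rintro ⟨a, b⟩ hab
    simp only [mem_sigma, mem_range] at hab
    simp only [Sigma.mk.inj_iff]
    exact ⟨by omega, HEq.rfl⟩
  · rintro ⟨a, b⟩ hab
    simp only [mem_filter, mem_product, mem_range] at hab
    show (a, a + b - a) = (a, b)
    have : a + b - a = b := by omega
    rw [this]
  · rintro ⟨a, b⟩ hab
    rfl

/-- The summand after the change of variables `i = j + k`. -/
noncomputable def Gfun (α ρ n : ℕ) (x : ℝ) (j k : ℕ) : ℝ :=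
  (-1:ℝ)^k / Real.Gamma ((j:ℝ) + k - ((n:ℝ) - ρ)) * ((α+n).choose j) * ((α+n).choose k)
    * poch ((α:ℝ)+ρ) k * x^j

lemma main_nat (α ρ n : ℕ) (hρ : 1 ≤ ρ) (x : ℝ) :
    ∑ i ∈ range (2*(α+n)+1), ∑ j ∈ range (i+1),
        (-1:ℝ)^(i+j) / Real.Gamma ((i:ℝ) - ((n:ℝ) - (ρ:ℝ)))
          * ((α+n).choose j) * ((α+n).choose (i-j)) * poch ((α:ℝ)+ρ) (i-j) * x^j
      = (-1:ℝ)^(α+n) * poch ((α:ℝ)+1) n / poch ((α:ℝ)+1) (ρ-1) := by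
  have step1 : ∑ i ∈ range (2*(α+n)+1), ∑ j ∈ range (i+1),
        (-1:ℝ)^(i+j) / Real.Gamma ((i:ℝ) - ((n:ℝ) - (ρ:ℝ)))
          * ((α+n).choose j) * ((α+n).choose (i-j)) * poch ((α:ℝ)+ρ) (i-j) * x^j
      = ∑ i ∈ range (2*(α+n)+1), ∑ j ∈ range (i+1), Gfun α ρ n x j (i-j) := by
    refine Finset.sum_congr rfl fun i hi => Finset.sum_congr rfl fun j hj => ?_
    simp only [mem_range] at hi hj
    have hji : j ≤ i := by omega
    have hsign : (-1:ℝ)^(i+j) = (-1:ℝ)^(i-j) := by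
      have h2 : i + j = (i-j) + 2*j := by omega
      rw [h2, pow_add, pow_mul, neg_one_sq, one_pow, mul_one]
    have hGam : (i:ℝ) - ((n:ℝ) - (ρ:ℝ)) = (j:ℝ) + ((i-j:ℕ):ℝ) - ((n:ℝ) - (ρ:ℝ)) := by
      rw [Nat.cast_sub hji]; ring
    rw [Gfun, hsign, hGam]
  rw [step1, tri (2*(α+n)) (Gfun α ρ n x)]
  have hsub : range (α+n+1) ×ˢ range (α+n+1)
      ⊆ (range (2*(α+n)+1) ×ˢ range (2*(α+n)+1)).filter (fun p => p.1 + p.2 ≤ 2*(α+n)) := by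
    rintro ⟨a, b⟩ hab
    simp only [mem_filter, mem_product, mem_range] at hab ⊢
    omega
  have hzero : ∀ p ∈ (range (2*(α+n)+1) ×ˢ range (2*(α+n)+1)).filter
      (fun p => p.1 + p.2 ≤ 2*(α+n)),
      p ∉ range (α+n+1) ×ˢ range (α+n+1) → Gfun α ρ n x p.1 p.2 = 0 := by
    rintro ⟨a, b⟩ hab hnab
    simp only [mem_filter, mem_product, mem_range] at hab hnab
    rcases (by omega : α + n < a ∨ α + n < b) with h | h
    · rw [Gfun, Nat.choose_eq_zero_of_lt h]; simp
    · rw [Gfun, Nat.choose_eq_zero_of_lt h]; simp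
  rw [← Finset.sum_subset hsub hzero, Finset.sum_product]
  have hinner : ∀ j ∈ range (α+n+1), ∑ k ∈ range (α+n+1), Gfun α ρ n x j k
      = ((α+n).choose j) * x^j * (((α+n-j).factorial : ℝ)/((α+ρ-1).factorial : ℝ))
        * (if α+n-j = α+n then (-1:ℝ)^(α+n) else 0) := by
    intro j hj
    simp only [mem_range] at hj
    have hj' : j ≤ α + n := by omega
    have step : ∀ k ∈ range (α+n+1), Gfun α ρ n x j k
        = (((α+n).choose j) * x^j * (((α+n-j).factorial:ℝ)/((α+ρ-1).factorial:ℝ)))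
          * ((-1:ℝ)^k * ((α+n).choose k) * (((k+(α+ρ-1)).choose (α+n-j) : ℕ) : ℝ)) := by
      intro k hk
      have hp := pg α ρ n j k hρ hj'
      rw [Gfun]
      have hre : (-1:ℝ)^k / Real.Gamma ((j:ℝ)+k-((n:ℝ)-ρ)) * ((α+n).choose j)
            * ((α+n).choose k) * poch ((α:ℝ)+ρ) k * x^j
          = (poch ((α:ℝ)+ρ) k / Real.Gamma ((j:ℝ)+k-((n:ℝ)-ρ)))
            * ((-1:ℝ)^k * ((α+n).choose j) * ((α+n).choose k) * x^j) := by ring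
      rw [hre, hp]; ring
    rw [Finset.sum_congr rfl step, ← Finset.mul_sum, alt_sumR (α+n) (α+ρ-1) (α+n-j) (by omega)]
  rw [Finset.sum_congr rfl hinner]
  rw [Finset.sum_eq_single 0 (fun b hb hb0 => by
      simp only [mem_range] at hb
      rw [if_neg (by omega), mul_zero])
    (fun h0 => absurd (mem_range.mpr (by omega)) h0)]
  simp only [Nat.choose_zero_right, Nat.cast_one, pow_zero, Nat.sub_zero, if_pos rfl, ↓reduceIte, one_mul,
    mul_one]
  have e2 : poch ((α:ℝ)+1) n = ((α+n).factorial : ℝ) / (α.factorial : ℝ) := by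
    rw [show (α:ℝ)+1 = (((α+1:ℕ)):ℝ) by push_cast; ring, poch_nat_cast,
      eq_div_iff (by positivity)]
    exact_mod_cast (mul_comm ((α+1).ascFactorial n) α.factorial).trans
      (Nat.factorial_mul_ascFactorial α n)
  have e3 : poch ((α:ℝ)+1) (ρ-1) = ((α+ρ-1).factorial : ℝ) / (α.factorial : ℝ) := by
    rw [show (α:ℝ)+1 = (((α+1:ℕ)):ℝ) by push_cast; ring, poch_nat_cast,
      eq_div_iff (by positivity)]
    have := Nat.factorial_mul_ascFactorial α (ρ-1)
    rw [show α + (ρ-1) = α+ρ-1 by omega] at this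
    exact_mod_cast congrArg (Nat.cast : ℕ → ℝ) ((mul_comm ((α+1).ascFactorial (ρ-1))
      α.factorial).trans this)
  rw [e2, e3]
  have hα : (α.factorial : ℝ) ≠ 0 := by positivity
  have hc : ((α+ρ-1).factorial : ℝ) ≠ 0 := by positivity
  field_simp

end Helpers

theorem K_special_value (α : ℕ) (r s : ℤ) (hr : 1 ≤ r) (hrs : 0 ≤ r + s) (x : ℝ) :
    ∑ i ∈ range (2 * (α + (r + s).toNat) + 1), ∑ j ∈ range (i + 1),
        (-1 : ℝ) ^ (i + j) / Real.Gamma ((i : ℝ) - s)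
          * ((α + (r + s).toNat).choose j : ℝ) * ((α + (r + s).toNat).choose (i - j) : ℝ)
          * poch ((α : ℝ) + r) (i - j) * x ^ j
      = (-1 : ℝ) ^ (α + (r + s).toNat) * poch ((α : ℝ) + 1) (r + s).toNat
          / poch ((α : ℝ) + 1) (r - 1).toNat := by
  lift r to ℕ using (by omega) with ρ
  have hρ : 1 ≤ ρ := by omega
  obtain ⟨n, rfl⟩ : ∃ n : ℕ, s = (n:ℤ) - ρ := ⟨((ρ:ℤ) + s).toNat, by omega⟩
  have h1 : ((ρ:ℤ) + ((n:ℤ) - ρ)).toNat = n := by omega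
  have h2 : ((ρ:ℤ) - 1).toNat = ρ - 1 := by omega
  simp only [h1, h2]
  have := main_nat α ρ n hρ x
  convert this using 4 with i hi j hj
  · push_cast; ring
end

section
/- Let \(\alpha > -1\) and define \(a_i(x) = \frac{1}{i!}\sum_{j=1}^i(-1)^{i+j+1}\binom{\alpha+1}{j-1}\binom{\alpha+2}{i-j}(\alpha+3)_{i-j}\,x^j\) for \(i\ge 1\). If \(\alpha\) is a nonnegative integer, then \(a_i(x) = 0\) for all \(i > 2\alpha+4\), \(a_{2\alpha+4}(x) = (-1)^{\alpha+1}\frac{x^{\alpha+2}}{(\alpha+2)!}\), and \(\sum_{i=1}^{2\alpha+4} a_i(x) = 0\) identically in x. -/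
open Finset

/-- The coefficients `a_i(x)` of the differential equation, for parameter `α`. -/
noncomputable def aCoef (α : ℝ) (i : ℕ) (x : ℝ) : ℝ :=
  1 / i.factorial *
    ∑ j ∈ Icc 1 i,
      (-1 : ℝ) ^ (i + j + 1) * gbinom (α + 1) (j - 1) * gbinom (α + 2) (i - j)
        * poch (α + 3) (i - j) * x ^ j

lemma gbinom_natCast (N m : ℕ) : gbinom (N : ℝ) m = N.choose m := by
  unfold gbinom poch
  rcases le_or_gt m N with h | h
  · have hx : ((N:ℝ) - m + 1) = ((N - m + 1 : ℕ) : ℝ) := by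
      push_cast [Nat.cast_sub h]; ring
    rw [hx, ← ascPochhammer_eval_cast, ascPochhammer_nat_eq_ascFactorial,
      Nat.ascFactorial_eq_factorial_mul_choose, Nat.sub_add_cancel h]
    field_simp
    push_cast; ring
  · have hz : (ascPochhammer ℝ m).eval ((N:ℝ) - m + 1) = 0 := by
      have hsplit := ascPochhammer_mul (S := ℝ) (m - 1 - N) (N + 1)
      have hm : (m - 1 - N) + (N + 1) = m := by omega
      rw [hm] at hsplit
      have := congrArg (Polynomial.eval ((N:ℝ) - m + 1)) hsplit
      rw [Polynomial.eval_mul, Polynomial.eval_comp, Polynomial.eval_add,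
        Polynomial.eval_X, Polynomial.eval_natCast] at this
      have hzero : ((N:ℝ) - m + 1) + (m - 1 - N : ℕ) = 0 := by
        have : ((m - 1 - N : ℕ) : ℝ) = (m:ℝ) - 1 - N := by
          push_cast [Nat.cast_sub (by omega : N ≤ m - 1), Nat.cast_sub (by omega : 1 ≤ m)]
          ring
        rw [this]; ring
      rw [hzero, ascPochhammer_ne_zero_eval_zero ℝ (Nat.succ_ne_zero N)] at this
      rw [← this, mul_zero]
    rw [hz, Nat.choose_eq_zero_of_lt h]
    simp

lemma alt_sum_choose_choose {n u : ℕ} (h : u < n) :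
    ∑ k ∈ range (n + 1), (-1:ℝ)^k * n.choose k * k.choose u = 0 := by
  have hsub : Ico u (n+1) ⊆ range (n+1) := by
    intro k hk; simp only [mem_Ico] at hk; exact mem_range.2 hk.2
  rw [← Finset.sum_subset hsub (by
    intro k _ hk
    simp only [mem_Ico, not_and, not_le] at hk
    have : k < u := by
      by_contra hc
      exact absurd (hk (le_of_not_gt hc)) (by simp at *; omega)
    rw [Nat.choose_eq_zero_of_lt this]; simp)]
  rw [Finset.sum_Ico_eq_sum_range]
  have hn1u : n + 1 - u = (n - u) + 1 := by omega
  rw [hn1u]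
  have : ∀ t ∈ range (n - u + 1),
      (-1:ℝ)^(u+t) * n.choose (u+t) * (u+t).choose u
        = ((-1:ℝ)^u * n.choose u) * ((-1:ℝ)^t * (n-u).choose t) := by
    intro t ht
    simp only [mem_range] at ht
    have h1 : u + t ≤ n := by omega
    have := Nat.choose_mul (n := n) (Nat.le_add_right u t)
    rw [Nat.add_sub_cancel_left] at this
    have hcast : (n.choose (u+t) * (u+t).choose u : ℝ) = (n.choose u * (n-u).choose t : ℝ) := by
      exact_mod_cast congrArg (Nat.cast : ℕ → ℝ) this
    rw [pow_add]
    linear_combination ((-1:ℝ)^u * (-1:ℝ)^t) * hcast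
  rw [Finset.sum_congr rfl this, ← Finset.mul_sum]
  have : ∑ t ∈ range (n - u + 1), (-1:ℝ)^t * (n-u).choose t = 0 := by
    have := Int.alternating_sum_range_choose_of_ne (n := n - u) (by omega)
    exact_mod_cast congrArg (Int.cast : ℤ → ℝ) this
  rw [this, mul_zero]

lemma alt_sum_choose_addchoose {n m : ℕ} (h : m < n) :
    ∑ k ∈ range (n + 1), (-1:ℝ)^k * n.choose k * (n+k).choose m = 0 := by
  have : ∀ k ∈ range (n+1), (-1:ℝ)^k * n.choose k * (n+k).choose m
      = ∑ ij ∈ Finset.HasAntidiagonal.antidiagonal m,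
          (n.choose ij.1 : ℝ) * ((-1:ℝ)^k * n.choose k * k.choose ij.2) := by
    intro k _
    rw [Nat.add_choose_eq]
    push_cast
    rw [Finset.mul_sum]
    exact Finset.sum_congr rfl (fun ij _ => by ring)
  rw [Finset.sum_congr rfl this, Finset.sum_comm]
  apply Finset.sum_eq_zero
  intro ij hij
  rw [← Finset.mul_sum]
  have h2 : ij.2 < n := by
    have := Finset.HasAntidiagonal.mem_antidiagonal.1 hij
    omega
  rw [alt_sum_choose_choose h2, mul_zero]

lemma inner_sum_zero {n j : ℕ} (h1 : 1 ≤ j) (h2 : j ≤ n) :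
    ∑ k ∈ range (n + 1),
      (-1:ℝ)^k * n.choose k * (n+1).ascFactorial k / (j+k).factorial = 0 := by
  have key : ∀ k ∈ range (n+1),
      (-1:ℝ)^k * n.choose k * (n+1).ascFactorial k / (j+k).factorial
        = ((n-j).factorial / n.factorial) *
            ((-1:ℝ)^k * n.choose k * (n+k).choose (n-j)) := by
    intro k _
    have hfac : (n.factorial : ℝ) * (n+1).ascFactorial k = (n+k).factorial := by
      exact_mod_cast congrArg (Nat.cast : ℕ → ℝ) (Nat.factorial_mul_ascFactorial n k)
    have hch : ((n+k).choose (n-j) : ℝ) * (n-j).factorial * (j+k).factorial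
        = (n+k).factorial := by
      have hle : n - j ≤ n + k := by omega
      have := Nat.choose_mul_factorial_mul_factorial hle
      have hsub : n + k - (n - j) = j + k := by omega
      rw [hsub] at this
      exact_mod_cast congrArg (Nat.cast : ℕ → ℝ) this
    have hjk : ((j+k).factorial : ℝ) ≠ 0 := Nat.cast_ne_zero.2 (Nat.factorial_ne_zero _)
    have hn : (n.factorial : ℝ) ≠ 0 := Nat.cast_ne_zero.2 (Nat.factorial_ne_zero _)
    have hnj : ((n-j).factorial : ℝ) ≠ 0 := Nat.cast_ne_zero.2 (Nat.factorial_ne_zero _)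
    have hascR : (((n+1).ascFactorial k : ℕ) : ℝ) = (n+k).factorial / n.factorial := by
      rw [eq_div_iff hn]; linear_combination hfac
    have hchR : (((n+k).choose (n-j) : ℕ) : ℝ)
        = (n+k).factorial / ((n-j).factorial * (j+k).factorial) := by
      rw [eq_div_iff (mul_ne_zero hnj hjk)]; linear_combination hch
    rw [hascR, hchR]
    field_simp
  rw [Finset.sum_congr rfl key, ← Finset.mul_sum,
    alt_sum_choose_addchoose (show n - j < n by omega), mul_zero]

lemma aCoef_nat (α : ℕ) (i : ℕ) (x : ℝ) :
    aCoef (α:ℝ) i x = 1 / i.factorial *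
      ∑ j ∈ Icc 1 i, (-1:ℝ)^(i+j+1) * (α+1).choose (j-1) * (α+2).choose (i-j)
        * (α+3).ascFactorial (i-j) * x^j := by
  unfold aCoef
  congr 1
  apply Finset.sum_congr rfl
  intro j hj
  have e1 : ((α:ℝ)+1) = ((α+1:ℕ):ℝ) := by push_cast; ring
  have e2 : ((α:ℝ)+2) = ((α+2:ℕ):ℝ) := by push_cast; ring
  have e3 : ((α:ℝ)+3) = ((α+3:ℕ):ℝ) := by push_cast; ring
  have hp : poch ((α:ℝ)+3) (i-j) = ((α+3).ascFactorial (i-j) : ℝ) := by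
    unfold poch
    rw [e3, ← ascPochhammer_eval_cast, ascPochhammer_nat_eq_ascFactorial]
  rw [e1, e2, gbinom_natCast, gbinom_natCast, hp]

theorem aCoef_nonneg_integer_alpha (α : ℕ) (x : ℝ) :
    (∀ i, 2 * α + 4 < i → aCoef α i x = 0) ∧
    aCoef α (2 * α + 4) x = (-1 : ℝ) ^ (α + 1) * x ^ (α + 2) / (α + 2).factorial ∧
    ∑ i ∈ Icc 1 (2 * α + 4), aCoef α i x = 0 := by
  refine ⟨?_, ?_, ?_⟩
  · -- part 1
    intro i hi
    rw [aCoef_nat, Finset.sum_eq_zero, mul_zero]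
    intro j hj
    simp only [mem_Icc] at hj
    rcases le_or_gt j (α+2) with hle | hgt
    · have : α + 2 < i - j := by omega
      simp [Nat.choose_eq_zero_of_lt this]
    · have : α + 1 < j - 1 := by omega
      simp [Nat.choose_eq_zero_of_lt this]
  · -- part 2
    rw [aCoef_nat, Finset.sum_eq_single (α+2)]
    · have e1 : α + 2 - 1 = α + 1 := by omega
      have e2 : 2*α + 4 - (α+2) = α + 2 := by omega
      have hsgn : (-1:ℝ)^((2*α+4)+(α+2)+1) = (-1:ℝ)^(α+1) := by
        rw [show (2*α+4)+(α+2)+1 = (α+1)+2*(α+3) by ring, pow_add, pow_mul,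
          neg_one_sq, one_pow, mul_one]
      have hasc : ((α+2).factorial : ℝ) * (α+3).ascFactorial (α+2)
          = (2*α+4).factorial := by
        have := Nat.factorial_mul_ascFactorial (α+2) (α+2)
        rw [show α+2+(α+2) = 2*α+4 by ring] at this
        exact_mod_cast congrArg (Nat.cast : ℕ → ℝ) this
      rw [e1, e2, hsgn, Nat.choose_self, Nat.choose_self, Nat.cast_one]
      have h1 : ((2*α+4).factorial : ℝ) ≠ 0 := Nat.cast_ne_zero.2 (Nat.factorial_ne_zero _)
      have h2 : ((α+2).factorial : ℝ) ≠ 0 := Nat.cast_ne_zero.2 (Nat.factorial_ne_zero _)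
      field_simp
      linear_combination (x^(α+2)) * hasc
    · intro j hj hne
      simp only [mem_Icc] at hj
      rcases le_or_gt j (α+2) with hle | hgt
      · have : α + 2 < 2*α+4 - j := by omega
        simp [Nat.choose_eq_zero_of_lt this]
      · have : α + 1 < j - 1 := by omega
        simp [Nat.choose_eq_zero_of_lt this]
    · intro h
      exact absurd (mem_Icc.2 ⟨by omega, by omega⟩) h
  · -- part 3
    have hrw : ∀ i, aCoef (α:ℝ) i x = ∑ j ∈ Ico 1 (i+1),
        1 / (i.factorial : ℝ) * ((-1:ℝ)^(i+j+1) * (α+1).choose (j-1) * (α+2).choose (i-j)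
          * (α+3).ascFactorial (i-j) * x^j) := by
      intro i
      rw [aCoef_nat, Finset.mul_sum, Finset.Ico_add_one_right_eq_Icc]
    calc ∑ i ∈ Icc 1 (2*α+4), aCoef (α:ℝ) i x
        = ∑ i ∈ Ico 1 (2*α+4+1), ∑ j ∈ Ico 1 (i+1),
            1 / (i.factorial : ℝ) * ((-1:ℝ)^(i+j+1) * (α+1).choose (j-1)
              * (α+2).choose (i-j) * (α+3).ascFactorial (i-j) * x^j) := by
          rw [← Finset.Ico_add_one_right_eq_Icc]
          exact Finset.sum_congr rfl fun i _ => hrw i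
      _ = ∑ j ∈ Ico 1 (2*α+4+1), ∑ i ∈ Ico j (2*α+4+1),
            1 / (i.factorial : ℝ) * ((-1:ℝ)^(i+j+1) * (α+1).choose (j-1)
              * (α+2).choose (i-j) * (α+3).ascFactorial (i-j) * x^j) := by
          rw [sum_Ico_Ico_comm 1 (2*α+4+1) (fun j i =>
            1 / (i.factorial : ℝ) * ((-1:ℝ)^(i+j+1) * (α+1).choose (j-1)
              * (α+2).choose (i-j) * (α+3).ascFactorial (i-j) * x^j))]
      _ = 0 := by
          apply Finset.sum_eq_zero
          intro j hj
          simp only [mem_Ico] at hj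
          rcases le_or_gt j (α+2) with hle | hgt
          · rw [Finset.sum_Ico_eq_sum_range]
            have hsub : range (α+2+1) ⊆ range (2*α+4+1-j) := by
              apply Finset.range_subset_range.2; omega
            rw [← Finset.sum_subset hsub (by
              intro k _ hk
              simp only [mem_range, not_lt] at hk
              have : α + 2 < k := by omega
              simp [Nat.choose_eq_zero_of_lt this])]
            have key : ∀ k ∈ range (α+2+1),
                1 / (((j+k).factorial : ℕ) : ℝ) * ((-1:ℝ)^((j+k)+j+1) * (α+1).choose (j-1)
                  * (α+2).choose ((j+k)-j) * (α+3).ascFactorial ((j+k)-j) * x^j)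
                = (-((α+1).choose (j-1) : ℝ) * x^j) *
                    ((-1:ℝ)^k * (α+2).choose k * (α+2+1).ascFactorial k
                      / (j+k).factorial) := by
              intro k _
              have hidx : (j+k) - j = k := by omega
              have hsgn : (-1:ℝ)^((j+k)+j+1) = -(-1:ℝ)^k := by
                rw [show (j+k)+j+1 = (k+1)+2*j by ring, pow_add, pow_mul,
                  neg_one_sq, one_pow, mul_one, pow_succ]
                ring
              rw [hidx, hsgn]
              ring
            rw [Finset.sum_congr rfl key, ← Finset.mul_sum,
              inner_sum_zero hj.1 hle, mul_zero]
          · apply Finset.sum_eq_zero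
            intro i _
            have : α + 1 < j - 1 := by omega
            simp [Nat.choose_eq_zero_of_lt this]
end
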